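/- arXiv:1708.06572 — 5 statements merged into one kernel-verified Lean document; each statement's English description precedes it below -/
import Mathlib

section
/- For any $a_2 \geq 4$ and any $u \in \mathbb{R}^3$, the number $s_{\pm}(u) = -\frac{\pm\sqrt{a_2} + (a_2-1)\sqrt{|u|^2(1+|u|^2)}}{1 + (a_2-1)(1+|u|^2)}$ satisfies $-1 < s_{\pm}(u) < 1$ (for both choices of sign). -/
/-- For `a₂ ≥ 4` and `u ∈ ℝ³`, the slope
`s± = -(±√a₂ + (a₂-1)√(|u|²(1+|u|²))) / (1 + (a₂-1)(1+|u|²))`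
satisfies `-1 < s± < 1` for both choices of sign. -/
theorem shear_slope_bound (a2 : ℝ) (ha : 4 ≤ a2)
    (u : EuclideanSpace ℝ (Fin 3)) (σ : ℝ) (hσ : σ = 1 ∨ σ = -1) :
    -1 < -(σ * Real.sqrt a2 + (a2 - 1) * Real.sqrt (‖u‖ ^ 2 * (1 + ‖u‖ ^ 2)))
          / (1 + (a2 - 1) * (1 + ‖u‖ ^ 2)) ∧
    -(σ * Real.sqrt a2 + (a2 - 1) * Real.sqrt (‖u‖ ^ 2 * (1 + ‖u‖ ^ 2)))
          / (1 + (a2 - 1) * (1 + ‖u‖ ^ 2)) < 1 := by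
  set b := ‖u‖ ^ 2 with hbdef
  have hb : 0 ≤ b := sq_nonneg _
  set s := Real.sqrt a2 with hsdef
  set r := Real.sqrt (b * (1 + b)) with hrdef
  have hs2 : s ^ 2 = a2 := Real.sq_sqrt (by linarith)
  have hs0 : 0 ≤ s := Real.sqrt_nonneg _
  have hs2' : 2 ≤ s := by nlinarith [sq_nonneg (s - 2)]
  have hr0 : 0 ≤ r := Real.sqrt_nonneg _
  have hrle : r ≤ b + 1 / 2 := by
    rw [hrdef, show b * (1 + b) = (b + 1/2) ^ 2 - 1/4 by ring]
    calc Real.sqrt ((b + 1/2) ^ 2 - 1/4) ≤ Real.sqrt ((b + 1/2) ^ 2) :=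
          Real.sqrt_le_sqrt (by linarith)
      _ = b + 1/2 := Real.sqrt_sq (by linarith)
  have hslt : s < (a2 + 1) / 2 := by nlinarith [sq_nonneg (s - 1)]
  have hD : 0 < 1 + (a2 - 1) * (1 + b) := by nlinarith
  constructor
  · rw [lt_div_iff₀ hD]
    rcases hσ with h | h <;> subst h <;> nlinarith
  · rw [div_lt_iff₀ hD]
    rcases hσ with h | h <;> subst h <;> nlinarith
end

section
/- Let $a_2 \geq 4$, $u \in \mathbb{R}^3$, and $\theta \in [0, 2\pi]$. Define $s_{\pm}(u,\theta) = -\frac{1}{1+(a_2-1)(1+|u|^2)}\left((a_2-1)\sqrt{|u|^2}\cos\theta\sqrt{1+|u|^2} \pm \sqrt{a_2 + (a_2-1)|u|^2 - (a_2-1)|u|^2\cos^2\theta}\right)$. Then $-1 < s_{\pm}(u,\theta) < 1$ for both choices of sign. -/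
/-- Algebraic core: if `A² = m c² (1+m)`, `R² = D - b m c²` with `D = 1 + b(1+m)`,
and the strict AM-GM bound `2A < 1 + m + m c²` holds, then `bA + R < D`. -/
lemma shear_slope_aux (b m c A R : ℝ) (hb : 3 ≤ b) (hm : 0 ≤ m) (hc : c ^ 2 ≤ 1)
    (hA0 : 0 ≤ A) (hA2 : A ^ 2 = m * c ^ 2 * (1 + m))
    (hAgm : 0 < 1 + m + m * c ^ 2 - 2 * A)
    (hR0 : 0 ≤ R) (hR2 : R ^ 2 = (1 + b * (1 + m)) - b * m * c ^ 2) :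
    b * A + R < 1 + b * (1 + m) := by
  have hbpos : (0 : ℝ) < b := by linarith
  have hDpos : (0 : ℝ) < 1 + b * (1 + m) := by nlinarith
  have hA1m : A < 1 + m := by nlinarith [sq_nonneg (A - (1 + m)), sq_nonneg c]
  have hX : 0 < 1 + b * (1 + m) - b * A := by nlinarith
  have hpos : 0 < (1 + b * (1 + m)) * (b * (1 + m + m * c ^ 2 - 2 * A)) :=
    mul_pos hDpos (mul_pos hbpos hAgm)
  have hA2' : b ^ 2 * A ^ 2 = b ^ 2 * (m * c ^ 2 * (1 + m)) := by rw [hA2]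
  have hsq : R ^ 2 < (1 + b * (1 + m) - b * A) ^ 2 := by nlinarith [hpos, hR2, hA2']
  have hR : R < 1 + b * (1 + m) - b * A := lt_of_pow_lt_pow_left₀ 2 hX.le hsq
  linarith

/-- For `a₂ ≥ 4`, `u ∈ ℝ³` and `θ ∈ [0, 2π]`, the slopes
`s±(u,θ) = -((a₂-1)√(|u|²) cos θ √(1+|u|²) ± √(a₂+(a₂-1)|u|² - (a₂-1)|u|² cos²θ))
            / (1+(a₂-1)(1+|u|²))`
of the shear-wave characteristic cone satisfy `-1 < s± < 1` for both signs. -/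
theorem shear_slope_bound_angle (a2 : ℝ) (ha : 4 ≤ a2)
    (u : EuclideanSpace ℝ (Fin 3)) (θ : ℝ) (hθ : θ ∈ Set.Icc (0 : ℝ) (2 * Real.pi))
    (σ : ℝ) (hσ : σ = 1 ∨ σ = -1) :
    -1 < -(1 / (1 + (a2 - 1) * (1 + ‖u‖ ^ 2))) *
          ((a2 - 1) * Real.sqrt (‖u‖ ^ 2) * Real.cos θ * Real.sqrt (1 + ‖u‖ ^ 2)
            + σ * Real.sqrt (a2 + (a2 - 1) * ‖u‖ ^ 2
                - (a2 - 1) * ‖u‖ ^ 2 * (Real.cos θ) ^ 2)) ∧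
    -(1 / (1 + (a2 - 1) * (1 + ‖u‖ ^ 2))) *
          ((a2 - 1) * Real.sqrt (‖u‖ ^ 2) * Real.cos θ * Real.sqrt (1 + ‖u‖ ^ 2)
            + σ * Real.sqrt (a2 + (a2 - 1) * ‖u‖ ^ 2
                - (a2 - 1) * ‖u‖ ^ 2 * (Real.cos θ) ^ 2)) < 1 := by
  have hm : (0 : ℝ) ≤ ‖u‖ ^ 2 := by positivity
  set m : ℝ := ‖u‖ ^ 2 with hm_def
  clear_value m
  have hb : (3 : ℝ) ≤ a2 - 1 := by linarith
  set b : ℝ := a2 - 1 with hb_def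
  clear_value b
  have ha2 : a2 = b + 1 := by rw [hb_def]; ring
  subst ha2
  set c : ℝ := Real.cos θ with hc_def
  have hc1 : -1 ≤ c := Real.neg_one_le_cos θ
  have hc2 : c ≤ 1 := Real.cos_le_one θ
  clear_value c
  have hcabs : |c| ≤ 1 := abs_le.2 ⟨hc1, hc2⟩
  have hcsq : |c| ^ 2 = c ^ 2 := sq_abs c
  have hcsq1 : c ^ 2 ≤ 1 := by nlinarith
  have hD : (0 : ℝ) < 1 + b * (1 + m) := by nlinarith
  have hsm : Real.sqrt m ^ 2 = m := Real.sq_sqrt hm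
  have hs1m : Real.sqrt (1 + m) ^ 2 = 1 + m := Real.sq_sqrt (by linarith)
  have hsm0 : 0 ≤ Real.sqrt m := Real.sqrt_nonneg _
  have hs1m0 : 0 ≤ Real.sqrt (1 + m) := Real.sqrt_nonneg _
  have hlt : Real.sqrt m < Real.sqrt (1 + m) := Real.sqrt_lt_sqrt hm (by linarith)
  have harg0 : 0 ≤ (b + 1) + b * m - b * m * c ^ 2 := by
    have := mul_nonneg (mul_nonneg (by linarith : (0:ℝ) ≤ b) hm)
      (by linarith : (0:ℝ) ≤ 1 - c ^ 2)
    nlinarith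
  set R : ℝ := Real.sqrt ((b + 1) + b * m - b * m * c ^ 2) with hR_def
  have hR0 : 0 ≤ R := Real.sqrt_nonneg _
  have hR2 : R ^ 2 = (1 + b * (1 + m)) - b * m * c ^ 2 := by
    rw [hR_def, Real.sq_sqrt harg0]; ring
  clear_value R
  set A : ℝ := Real.sqrt m * |c| * Real.sqrt (1 + m) with hA_def
  have hA0 : 0 ≤ A := by positivity
  have hA2 : A ^ 2 = m * c ^ 2 * (1 + m) := by
    rw [hA_def, mul_pow, mul_pow, hsm, hs1m, hcsq]
  have hAgm : 0 < 1 + m + m * c ^ 2 - 2 * A := by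
    have hy : Real.sqrt m * |c| < Real.sqrt (1 + m) := by
      calc Real.sqrt m * |c| ≤ Real.sqrt m * 1 :=
            mul_le_mul_of_nonneg_left hcabs hsm0
        _ = Real.sqrt m := by ring
        _ < Real.sqrt (1 + m) := hlt
    have hsq : 0 < (Real.sqrt (1 + m) - Real.sqrt m * |c|) ^ 2 :=
      pow_pos (by linarith) 2
    nlinarith [hsq, hsm, hs1m, hcsq]
  have key : b * A + R < 1 + b * (1 + m) :=
    shear_slope_aux b m c A R hb hm hcsq1 hA0 hA2 hAgm hR0 hR2
  -- bound the absolute value of the numerator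
  set N : ℝ := b * Real.sqrt m * c * Real.sqrt (1 + m) + σ * R with hN_def
  have hσabs : |σ| = 1 := by rcases hσ with h | h <;> simp [h]
  have habsN : |N| < 1 + b * (1 + m) := by
    have h1 : |N| ≤ |b * Real.sqrt m * c * Real.sqrt (1 + m)| + |σ * R| := abs_add_le _ _
    have h2 : |b * Real.sqrt m * c * Real.sqrt (1 + m)| = b * A := by
      rw [abs_mul, abs_mul, abs_mul, abs_of_nonneg (by linarith : (0:ℝ) ≤ b),
        abs_of_nonneg hsm0, abs_of_nonneg hs1m0, hA_def]
      ring
    have h3 : |σ * R| = R := by rw [abs_mul, hσabs, abs_of_nonneg hR0, one_mul]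
    calc |N| ≤ |b * Real.sqrt m * c * Real.sqrt (1 + m)| + |σ * R| := h1
      _ = b * A + R := by rw [h2, h3]
      _ < 1 + b * (1 + m) := key
  obtain ⟨hN1, hN2⟩ := abs_lt.1 habsN
  have hgoal : -(1 / (1 + b * (1 + m))) * N = -(N / (1 + b * (1 + m))) := by ring
  constructor
  · rw [hgoal]
    exact neg_lt_neg ((div_lt_one hD).2 hN2)
  · rw [hgoal]
    have : -1 < N / (1 + b * (1 + m)) := (lt_div_iff₀ hD).2 (by linarith)
    linarith
end

section
/- Let $g$ be the Minkowski metric on $\mathbb{R}^4$ with signature $(-,+,+,+)$ and let $u \in \mathbb{R}^4$ be a timelike vector with $g(u,u) = -1$, written $u = (u^0, \underline{u})$ with $u^0 = \sqrt{1+|\underline{u}|^2}$. For $a_2 \geq 4$, the quadratic form $Q(\xi) = (a_2-1)(u^\mu \xi_\mu)^2 - \xi^\mu\xi_\mu$ on covectors $\xi$ (indices raised with the Minkowski metric) is a hyperbolic quadratic form: for every nonzero $(\xi_1,\xi_2,\xi_3) \in \mathbb{R}^3$, the equation $Q(\xi_0, \xi_1, \xi_2, \xi_3) = 0$ has exactly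 two distinct real roots $\xi_0$. -/
/-- Hyperbolicity of the shear-wave quadratic form
`Q(ξ) = (a₂-1)(uᵘξᵤ)² - ξᵘξᵤ` in Minkowski background (signature `(-,+,+,+)`)
with `u` unit timelike, `u⁰ = √(1+|u̲|²)`: for every nonzero spatial covector
`(ξ₁,ξ₂,ξ₃)` the equation `Q = 0` has exactly two distinct real roots `ξ₀`. -/
theorem shear_quadratic_hyperbolic (a2 : ℝ) (ha : 4 ≤ a2) (u : Fin 4 → ℝ)
    (hu0 : u 0 = Real.sqrt (1 + (u 1) ^ 2 + (u 2) ^ 2 + (u 3) ^ 2))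
    (hnorm : -(u 0) ^ 2 + (u 1) ^ 2 + (u 2) ^ 2 + (u 3) ^ 2 = -1)
    (ξ1 ξ2 ξ3 : ℝ) (hξ : ¬(ξ1 = 0 ∧ ξ2 = 0 ∧ ξ3 = 0)) :
    ∃ r1 r2 : ℝ, r1 ≠ r2 ∧ ∀ x : ℝ,
      (a2 - 1) * (u 0 * x + u 1 * ξ1 + u 2 * ξ2 + u 3 * ξ3) ^ 2
          - (-(x ^ 2) + ξ1 ^ 2 + ξ2 ^ 2 + ξ3 ^ 2) = 0
        ↔ (x = r1 ∨ x = r2) := by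
  have hu2 : (u 0) ^ 2 = 1 + (u 1) ^ 2 + (u 2) ^ 2 + (u 3) ^ 2 := by linarith
  have hT : 0 < ξ1 ^ 2 + ξ2 ^ 2 + ξ3 ^ 2 := by
    by_contra h
    push_neg at h
    have h1 : ξ1 = 0 := by nlinarith [sq_nonneg ξ1, sq_nonneg ξ2, sq_nonneg ξ3]
    have h2 : ξ2 = 0 := by nlinarith [sq_nonneg ξ1, sq_nonneg ξ2, sq_nonneg ξ3]
    have h3 : ξ3 = 0 := by nlinarith [sq_nonneg ξ1, sq_nonneg ξ2, sq_nonneg ξ3]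
    exact hξ ⟨h1, h2, h3⟩
  set s : ℝ := u 1 * ξ1 + u 2 * ξ2 + u 3 * ξ3 with hs
  set A : ℝ := (a2 - 1) * (u 0) ^ 2 + 1 with hAdef
  set B : ℝ := 2 * (a2 - 1) * (u 0) * s with hBdef
  set C : ℝ := (a2 - 1) * s ^ 2 - (ξ1 ^ 2 + ξ2 ^ 2 + ξ3 ^ 2) with hCdef
  have hA : 0 < A := by
    have : 0 ≤ (a2 - 1) * (u 0) ^ 2 := mul_nonneg (by linarith) (sq_nonneg _)
    linarith
  have hCS : s ^ 2 ≤ ((u 1) ^ 2 + (u 2) ^ 2 + (u 3) ^ 2) * (ξ1 ^ 2 + ξ2 ^ 2 + ξ3 ^ 2) := by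
    rw [hs]
    nlinarith [sq_nonneg (u 1 * ξ2 - u 2 * ξ1), sq_nonneg (u 1 * ξ3 - u 3 * ξ1),
      sq_nonneg (u 2 * ξ3 - u 3 * ξ2)]
  have hdval : discrim A B C
      = 4 * (a2 - 1) * (((u 1) ^ 2 + (u 2) ^ 2 + (u 3) ^ 2) * (ξ1 ^ 2 + ξ2 ^ 2 + ξ3 ^ 2)
          - s ^ 2) + 4 * a2 * (ξ1 ^ 2 + ξ2 ^ 2 + ξ3 ^ 2) := by
    simp only [discrim, hAdef, hBdef, hCdef]
    linear_combination (4 * (a2 - 1) * (ξ1 ^ 2 + ξ2 ^ 2 + ξ3 ^ 2)) * hu2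
  have hD : 0 < discrim A B C := by
    rw [hdval]
    nlinarith [mul_nonneg (show (0:ℝ) ≤ a2 - 1 by linarith)
      (show (0:ℝ) ≤ ((u 1) ^ 2 + (u 2) ^ 2 + (u 3) ^ 2) * (ξ1 ^ 2 + ξ2 ^ 2 + ξ3 ^ 2) - s ^ 2
        by linarith),
      mul_pos (show (0:ℝ) < a2 by linarith) hT]
  set d : ℝ := Real.sqrt (discrim A B C) with hddef
  have hdpos : 0 < d := Real.sqrt_pos.mpr hD
  have hdsq : discrim A B C = d * d := (Real.mul_self_sqrt hD.le).symm
  refine ⟨(-B + d) / (2 * A), (-B - d) / (2 * A), ?_, ?_⟩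
  · intro heq
    have h2A : (2 * A) ≠ 0 := by positivity
    field_simp at heq
    linarith
  · intro x
    have hconv : (a2 - 1) * (u 0 * x + u 1 * ξ1 + u 2 * ξ2 + u 3 * ξ3) ^ 2
        - (-(x ^ 2) + ξ1 ^ 2 + ξ2 ^ 2 + ξ3 ^ 2) = A * (x * x) + B * x + C := by
      rw [hAdef, hBdef, hCdef, hs]; ring
    rw [hconv]
    exact quadratic_eq_zero_iff hA.ne' hdsq x
end

section
/- Let $u, \xi \in \mathbb{R}^3$ and $a_2 \geq 4$. Define $D = 1 + (a_2-1)(1+|u|^2)$, $A = (a_2-1)(u\cdot\xi)\sqrt{1+|u|^2}$, and $B = \sqrt{(a_2+(a_2-1)|u|^2)|\xi|^2 - (a_2-1)(u\cdot\xi)^2}$. Then the two numbers $\xi_{0,\pm} = -(A \pm B)/D$ satisfy $|\xi_{0,\pm}| < |\xi|$ whenever $\xi \neq 0$. -/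
/-- Causality of the shear waves: the roots `ξ₀,± = -(A ± B)/D` of the
shear-wave characteristic polynomial satisfy `|ξ₀,±| < |ξ|` for `ξ ≠ 0`. -/
theorem shear_roots_inside_light_cone (a2 : ℝ) (ha : 4 ≤ a2)
    (u ξ : EuclideanSpace ℝ (Fin 3)) (hξ : ξ ≠ 0) :
    let D : ℝ := 1 + (a2 - 1) * (1 + ‖u‖ ^ 2)
    let A : ℝ := (a2 - 1) * (inner ℝ u ξ : ℝ) * Real.sqrt (1 + ‖u‖ ^ 2)
    let B : ℝ := Real.sqrt ((a2 + (a2 - 1) * ‖u‖ ^ 2) * ‖ξ‖ ^ 2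
        - (a2 - 1) * (inner ℝ u ξ : ℝ) ^ 2)
    |(-(A + B)) / D| < ‖ξ‖ ∧ |(-(A - B)) / D| < ‖ξ‖ := by
  intro D A B
  set t : ℝ := (inner ℝ u ξ : ℝ) with ht
  set m : ℝ := ‖u‖ with hm
  set n : ℝ := ‖ξ‖ with hn
  have hn0 : 0 < n := norm_pos_iff.mpr hξ
  have hm0 : 0 ≤ m := norm_nonneg u
  have htm : |t| ≤ m * n := abs_real_inner_le_norm u ξ
  set c : ℝ := Real.sqrt (1 + m ^ 2) with hc
  have hc2 : c ^ 2 = 1 + m ^ 2 := Real.sq_sqrt (by positivity)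
  have hm2 : m ^ 2 = c ^ 2 - 1 := by linarith
  have hc0 : 0 < c := Real.sqrt_pos.mpr (by positivity)
  have hcm : m < c := by nlinarith
  have hX : 0 ≤ (a2 + (a2 - 1) * m ^ 2) * n ^ 2 - (a2 - 1) * t ^ 2 := by
    nlinarith [sq_abs t, sq_nonneg (m * n), abs_nonneg t,
      mul_self_le_mul_self (abs_nonneg t) htm]
  have hB0 : 0 ≤ B := Real.sqrt_nonneg _
  have hB2 : B ^ 2 = (a2 + (a2 - 1) * m ^ 2) * n ^ 2 - (a2 - 1) * t ^ 2 :=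
    Real.sq_sqrt hX
  have hD : 0 < D := by simp only [D]; nlinarith
  have hDval : D = 1 + (a2 - 1) * (1 + m ^ 2) := by simp only [D, ← hm]
  have hA : |A| = (a2 - 1) * |t| * c := by
    simp only [A, ← hm, ← ht, ← hc]
    rw [abs_mul, abs_mul, abs_of_pos hc0, abs_of_pos (by linarith : (0:ℝ) < a2 - 1)]
  have hkey : |A| + B < D * n := by
    rw [hA]
    have h1 : |t| < c * n := lt_of_le_of_lt htm (by nlinarith)
    have hRHS : (a2 - 1) * |t| * c < D * n := by
      rw [hDval]
      have h2 : |t| * c ≤ m * n * c := by nlinarith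
      have h4 : (a2 - 1) * (|t| * c) ≤ (a2 - 1) * (m * n * c) :=
        mul_le_mul_of_nonneg_left h2 (by linarith)
      have h5 : (a2 - 1) * (m * c * n) < (a2 - 1) * (c * c * n) := by
        apply mul_lt_mul_of_pos_left _ (by linarith : (0:ℝ) < a2 - 1)
        exact mul_lt_mul_of_pos_right (mul_lt_mul_of_pos_right hcm hc0) hn0
      have h6 : (a2 - 1) * (c * c * n) = (a2 - 1) * (1 + m ^ 2) * n := by
        rw [show c * c * n = c ^ 2 * n by ring, hc2]; ring
      nlinarith [h4, h5, h6, hn0]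
    have h2 : B ^ 2 < (D * n - (a2 - 1) * |t| * c) ^ 2 := by
      rw [hB2]
      have hs2 : t ^ 2 = |t| ^ 2 := (sq_abs t).symm
      have e : (D * n - (a2 - 1) * |t| * c) ^ 2
          - ((a2 + (a2 - 1) * m ^ 2) * n ^ 2 - (a2 - 1) * t ^ 2)
          = D * (a2 - 1) * (c * n - |t|) ^ 2 := by
        rw [hDval, hs2, hm2]; ring
      have hpos : 0 < D * (a2 - 1) * (c * n - |t|) ^ 2 :=
        mul_pos (mul_pos hD (by linarith : (0:ℝ) < a2 - 1))
          (pow_pos (by linarith : (0:ℝ) < c * n - |t|) 2)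
      linarith [e, hpos]
    nlinarith
  refine ⟨?_, ?_⟩ <;> rw [abs_div, abs_of_pos hD, div_lt_iff₀ hD, abs_neg]
  · calc |A + B| ≤ |A| + |B| := abs_add_le _ _
      _ = |A| + B := by rw [abs_of_nonneg hB0]
      _ < D * n := hkey
      _ = n * D := mul_comm _ _
  · calc |A - B| ≤ |A| + |B| := by
          rw [sub_eq_add_neg]
          exact (abs_add_le _ _).trans (by rw [abs_neg])
      _ = |A| + B := by rw [abs_of_nonneg hB0]
      _ < D * n := hkey
      _ = n * D := mul_comm _ _
end

section
/- Let $u, \xi \in \mathbb{R}^3$, $\xi \neq 0$, and $a_2 \geq 4$. Define $D = -2(2+a_2) - (a_2-4)(1+|u|^2)$, $A = (a_2-4)(u\cdot\xi)\sqrt{1+|u|^2}$, and $B = \sqrt{2}\sqrt{(3a_2(2+a_2)+(a_2^2-2a_2-8)|u|^2)|\xi|^2 - (a_2^2-2a_2-8)(u\cdot\xi)^2}$. Then the two numbers $\xi_{0,\pm} = (A \pm B)/D$ are real and distinct. -/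
/-- Hyperbolicity of the sound-wave polynomial: the roots `ξ₀,± = (A ± B)/D`
of `p₃` are real and distinct for `ξ ≠ 0` and `a₂ ≥ 4`. -/
theorem sound_roots_distinct (a2 : ℝ) (ha : 4 ≤ a2)
    (u ξ : EuclideanSpace ℝ (Fin 3)) (hξ : ξ ≠ 0) :
    let D : ℝ := -2 * (2 + a2) - (a2 - 4) * (1 + ‖u‖ ^ 2)
    let A : ℝ := (a2 - 4) * (inner ℝ u ξ : ℝ) * Real.sqrt (1 + ‖u‖ ^ 2)
    let B : ℝ := Real.sqrt 2 * Real.sqrt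
        ((3 * a2 * (2 + a2) + (a2 ^ 2 - 2 * a2 - 8) * ‖u‖ ^ 2) * ‖ξ‖ ^ 2
          - (a2 ^ 2 - 2 * a2 - 8) * (inner ℝ u ξ : ℝ) ^ 2)
    (A + B) / D ≠ (A - B) / D := by
  intro D A B
  have hξn : 0 < ‖ξ‖ := norm_pos_iff.mpr hξ
  have hcs : |(inner ℝ u ξ : ℝ)| ≤ ‖u‖ * ‖ξ‖ := abs_real_inner_le_norm u ξ
  have hcs2 : (inner ℝ u ξ : ℝ) ^ 2 ≤ ‖u‖ ^ 2 * ‖ξ‖ ^ 2 := by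
    have := sq_abs (inner ℝ u ξ : ℝ)
    nlinarith [abs_nonneg (inner ℝ u ξ : ℝ), norm_nonneg u, norm_nonneg ξ]
  have harg : 0 < (3 * a2 * (2 + a2) + (a2 ^ 2 - 2 * a2 - 8) * ‖u‖ ^ 2) * ‖ξ‖ ^ 2
      - (a2 ^ 2 - 2 * a2 - 8) * (inner ℝ u ξ : ℝ) ^ 2 := by
    have hc : 0 ≤ a2 ^ 2 - 2 * a2 - 8 := by nlinarith
    nlinarith [mul_nonneg hc (sub_nonneg.mpr hcs2),
      mul_pos (show (0:ℝ) < 3 * a2 * (2 + a2) by nlinarith) (mul_pos hξn hξn)]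
  have hB : 0 < B := by
    apply mul_pos (Real.sqrt_pos.mpr (by norm_num)) (Real.sqrt_pos.mpr harg)
  have hD : D ≠ 0 := by
    have : D < 0 := by
      have : 0 ≤ (a2 - 4) * (1 + ‖u‖ ^ 2) := by nlinarith [sq_nonneg ‖u‖]
      simp only [D]; nlinarith
    linarith
  intro h
  have h2 : A + B = A - B := by
    field_simp at h
    linarith
  linarith
end
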